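/- Let (A, B, C) be a recollement of abelian categories. If i^! is exact, then for every object X of B the counit θ_X : i_*(i^!(X)) → X of the adjunction i_* ⊣ i^! and the unit ϑ_X : X → j_*(j^*(X)) of the adjunction j^* ⊣ j_* form a short exact sequence 0 → i_*(i^!(X)) → X → j_*(j^*(X)) → 0 in B. -/
import Mathlib


open CategoryTheory CategoryTheory.Limits CategoryTheory.Abelian ZeroObject

universe v u

namespace PaperRecollement

/-- The `k`-th Ext group of two objects in an abelian category,
as a type (it carries an `AddCommGroup` structure). -/
noncomputable def ExtGrp {D : Type u} [Category.{v} D] [Abelian D] (X Y : D) (k : ℕ) :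
    Type (max u v) :=
  letI : HasDerivedCategory.{max u v} D := HasDerivedCategory.standard D
  letI : HasExt.{max u v} D := hasExt_of_hasDerivedCategory D
  Abelian.Ext X Y k

noncomputable instance {D : Type u} [Category.{v} D] [Abelian D] (X Y : D) (k : ℕ) :
    AddCommGroup (ExtGrp X Y k) :=
  letI : HasDerivedCategory.{max u v} D := HasDerivedCategory.standard D
  letI : HasExt.{max u v} D := hasExt_of_hasDerivedCategory D
  inferInstanceAs (AddCommGroup (Abelian.Ext X Y k))

/-- `Ext^k(X, Y) = 0`. -/
def ExtVanish {D : Type u} [Category.{v} D] [Abelian D] (X Y : D) (k : ℕ) : Prop :=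
  Subsingleton (ExtGrp X Y k)

/-- A functor between abelian categories is exact if it is additive and preserves
short exact sequences. -/
structure IsExactFunctor {A : Type u} {B : Type u} [Category.{v} A] [Category.{v} B]
    [Abelian A] [Abelian B] (F : A ⥤ B) : Prop where
  additive : F.Additive
  preserves_shortExact : ∀ ⦃X Y Z : A⦄ (f : X ⟶ Y) (g : Y ⟶ Z) (w : f ≫ g = 0)
    (w' : F.map f ≫ F.map g = 0),
    (ShortComplex.mk f g w).ShortExact → (ShortComplex.mk (F.map f) (F.map g) w').ShortExact

/-- A recollement of abelian categories. -/
structure Recollement (A B C : Type u) [Category.{v} A] [Category.{v} B] [Category.{v} C]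
    [Abelian A] [Abelian B] [Abelian C] where
  /-- `i_* : A ⥤ B` -/
  iStar : A ⥤ B
  /-- `i^* : B ⥤ A` -/
  iUStar : B ⥤ A
  /-- `i^! : B ⥤ A` -/
  iShriek : B ⥤ A
  /-- `j^* : B ⥤ C` -/
  jUStar : B ⥤ C
  /-- `j_! : C ⥤ B` -/
  jShriek : C ⥤ B
  /-- `j_* : C ⥤ B` -/
  jStar : C ⥤ B
  adj₁ : iUStar ⊣ iStar
  adj₂ : iStar ⊣ iShriek
  adj₃ : jShriek ⊣ jUStar
  adj₄ : jUStar ⊣ jStar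
  iUStar_additive : iUStar.Additive
  iShriek_additive : iShriek.Additive
  jShriek_additive : jShriek.Additive
  jStar_additive : jStar.Additive
  iStar_full : iStar.Full
  iStar_faithful : iStar.Faithful
  jShriek_full : jShriek.Full
  jShriek_faithful : jShriek.Faithful
  jStar_full : jStar.Full
  jStar_faithful : jStar.Faithful
  iStar_exact : IsExactFunctor iStar
  jUStar_exact : IsExactFunctor jUStar
  essIm_iStar_eq_ker_jUStar : ∀ X : B,
    (∃ Y : A, Nonempty (iStar.obj Y ≅ X)) ↔ Nonempty (jUStar.obj X ≅ 0)

variable {D : Type u} [Category.{v} D] [Abelian D]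

/-- `Z^∧_m` : objects with a `Z`-resolution of length `m`. -/
def ResClass (Z : Set D) : ℕ → Set D
  | 0 => {C | ∃ Z₀ ∈ Z, Nonempty (Z₀ ≅ C)}
  | (m + 1) => {C | ∃ (K X : D) (f : K ⟶ X) (g : X ⟶ C) (w : f ≫ g = 0),
      (ShortComplex.mk f g w).ShortExact ∧ X ∈ Z ∧ K ∈ ResClass Z m}

/-- `Z^∨_m` : objects with a `Z`-coresolution of length `m`. -/
def CoresClass (Z : Set D) : ℕ → Set D
  | 0 => {C | ∃ Z₀ ∈ Z, Nonempty (C ≅ Z₀)}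
  | (m + 1) => {C | ∃ (X K : D) (f : C ⟶ X) (g : X ⟶ K) (w : f ≫ g = 0),
      (ShortComplex.mk f g w).ShortExact ∧ X ∈ Z ∧ K ∈ CoresClass Z m}

/-- Left `n`-cotorsion pair. -/
structure IsLeftNCotorsionPair (n : ℕ) (𝒳 𝒴 : Set D) : Prop where
  closed_summands : ∀ ⦃X X' : D⦄, X ∈ 𝒳 →
    (∃ (s : X' ⟶ X) (r : X ⟶ X'), s ≫ r = 𝟙 X') → X' ∈ 𝒳
  ext_vanish : ∀ ⦃X Y : D⦄, X ∈ 𝒳 → Y ∈ 𝒴 → ∀ k, 1 ≤ k → k ≤ n → ExtVanish X Y k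
  exists_ses : ∀ C : D, ∃ (K X : D) (f : K ⟶ X) (g : X ⟶ C) (w : f ≫ g = 0),
    (ShortComplex.mk f g w).ShortExact ∧ X ∈ 𝒳 ∧ K ∈ ResClass 𝒴 (n - 1)

/-- Right `n`-cotorsion pair. -/
structure IsRightNCotorsionPair (n : ℕ) (𝒳 𝒴 : Set D) : Prop where
  closed_summands : ∀ ⦃Y Y' : D⦄, Y ∈ 𝒴 →
    (∃ (s : Y' ⟶ Y) (r : Y ⟶ Y'), s ≫ r = 𝟙 Y') → Y' ∈ 𝒴
  ext_vanish : ∀ ⦃X Y : D⦄, X ∈ 𝒳 → Y ∈ 𝒴 → ∀ k, 1 ≤ k → k ≤ n → ExtVanish X Y k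
  exists_ses : ∀ C : D, ∃ (Y Z : D) (f : C ⟶ Y) (g : Y ⟶ Z) (w : f ≫ g = 0),
    (ShortComplex.mk f g w).ShortExact ∧ Y ∈ 𝒴 ∧ Z ∈ CoresClass 𝒳 (n - 1)

/-- `n`-cotorsion pair. -/
def IsNCotorsionPair (n : ℕ) (𝒳 𝒴 : Set D) : Prop :=
  IsLeftNCotorsionPair n 𝒳 𝒴 ∧ IsRightNCotorsionPair n 𝒳 𝒴

/-- Hereditary `n`-cotorsion pair. -/
def IsHereditaryNCotorsionPair (n : ℕ) (𝒳 𝒴 : Set D) : Prop :=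
  IsNCotorsionPair n 𝒳 𝒴 ∧ ∀ ⦃X Y : D⦄, X ∈ 𝒳 → Y ∈ 𝒴 → ExtVanish X Y (n + 1)

/-- The image class of a class of objects under a functor: objects isomorphic to
`F.obj X` for some `X ∈ S`. -/
def imgClass {A B : Type u} [Category.{v} A] [Category.{v} B] (F : A ⥤ B) (S : Set A) :
    Set B :=
  {Y | ∃ X ∈ S, Nonempty (F.obj X ≅ Y)}

/-- A pseudo cluster tilting subcategory of an abelian category, given as a class of
objects: a full additive iso-closed subcategory admitting the two approximation
short exact sequences. -/
structure IsPseudoClusterTilting (T : Set D) : Prop where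
  iso_closed : ∀ ⦃X Y : D⦄, X ∈ T → Nonempty (X ≅ Y) → Y ∈ T
  zero_mem : (0 : D) ∈ T
  biprod_mem : ∀ ⦃X Y : D⦄, X ∈ T → Y ∈ T → (X ⊞ Y) ∈ T
  left_approx : ∀ C : D, ∃ (T₁ T₂ : D) (f : C ⟶ T₁) (g : T₁ ⟶ T₂) (w : f ≫ g = 0),
    (ShortComplex.mk f g w).ShortExact ∧ T₁ ∈ T ∧ T₂ ∈ T ∧
      ∀ T' ∈ T, ∀ h : C ⟶ T', ∃ k : T₁ ⟶ T', f ≫ k = h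
  right_approx : ∀ C : D, ∃ (T₃ T₄ : D) (f : T₃ ⟶ T₄) (g : T₄ ⟶ C) (w : f ≫ g = 0),
    (ShortComplex.mk f g w).ShortExact ∧ T₃ ∈ T ∧ T₄ ∈ T ∧
      ∀ T' ∈ T, ∀ h : T' ⟶ C, ∃ k : T' ⟶ T₄, k ≫ g = h


variable {A B C : Type u} [Category.{v} A] [Category.{v} B] [Category.{v} C]
  [Abelian A] [Abelian B] [Abelian C]

section AuxLemmas

lemma aux_shortExact_mk_cokernel {D : Type u} [Category.{v} D] [Abelian D]
    {X Y : D} (f : X ⟶ Y) [Mono f] :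
    (ShortComplex.mk f (cokernel.π f) (cokernel.condition f)).ShortExact where
  exact := ShortComplex.exact_of_g_is_cokernel _ (cokernelIsCokernel f)

lemma aux_shortExact_mk_kernel {D : Type u} [Category.{v} D] [Abelian D]
    {X Y : D} (f : X ⟶ Y) [Epi f] :
    (ShortComplex.mk (kernel.ι f) f (kernel.condition f)).ShortExact where
  exact := ShortComplex.exact_of_f_is_kernel _ (kernelIsKernel f)

lemma IsExactFunctor.mono_map {A B : Type u} [Category.{v} A] [Category.{v} B]
    [Abelian A] [Abelian B] {F : A ⥤ B} (hF : IsExactFunctor F) {X Y : A}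
    (f : X ⟶ Y) [Mono f] : Mono (F.map f) := by
  haveI := hF.additive
  have h := hF.preserves_shortExact f (cokernel.π f) (cokernel.condition f)
    (by rw [← F.map_comp, cokernel.condition, F.map_zero]) (aux_shortExact_mk_cokernel f)
  exact h.mono_f

lemma IsExactFunctor.epi_map {A B : Type u} [Category.{v} A] [Category.{v} B]
    [Abelian A] [Abelian B] {F : A ⥤ B} (hF : IsExactFunctor F) {X Y : A}
    (f : X ⟶ Y) [Epi f] : Epi (F.map f) := by
  haveI := hF.additive
  have h := hF.preserves_shortExact (kernel.ι f) f (kernel.condition f)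
    (by rw [← F.map_comp, kernel.condition, F.map_zero]) (aux_shortExact_mk_kernel f)
  exact h.epi_g

section

variable {A B C : Type u} [Category.{v} A] [Category.{v} B] [Category.{v} C]
  [Abelian A] [Abelian B] [Abelian C]

lemma aux_isZero_jUStar_iStar (R : Recollement A B C) (Y : A) :
    IsZero (R.jUStar.obj (R.iStar.obj Y)) := by
  obtain ⟨e⟩ := (R.essIm_iStar_eq_ker_jUStar (R.iStar.obj Y)).1 ⟨Y, ⟨Iso.refl _⟩⟩
  exact (isZero_zero C).of_iso e

lemma aux_isZero_iShriek_jStar (R : Recollement A B C) (Z : C) :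
    IsZero (R.iShriek.obj (R.jStar.obj Z)) := by
  haveI := R.iShriek_additive
  haveI := R.jStar_additive
  rw [IsZero.iff_id_eq_zero]
  set h : R.iStar.obj (R.iShriek.obj (R.jStar.obj Z)) ⟶ R.jStar.obj Z :=
    ((R.adj₂.homEquiv _ _).symm (𝟙 _)) with hh
  have hz : h = 0 := by
    have h0 : (R.adj₄.homEquiv _ _).symm h = 0 :=
      (aux_isZero_jUStar_iStar R _).eq_of_src _ _
    calc h = (R.adj₄.homEquiv _ _) ((R.adj₄.homEquiv _ _).symm h) :=
            ((R.adj₄.homEquiv _ _).apply_symm_apply h).symm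
      _ = 0 := by rw [h0, Adjunction.homEquiv_unit, Functor.map_zero, comp_zero]
  calc 𝟙 (R.iShriek.obj (R.jStar.obj Z)) = (R.adj₂.homEquiv _ _) h :=
        ((R.adj₂.homEquiv _ _).apply_symm_apply _).symm
    _ = 0 := by rw [hz, Adjunction.homEquiv_unit, Functor.map_zero, comp_zero]

lemma aux_factor_through_counit (R : Recollement A B C) {K X : B}
    (hK : IsZero (R.jUStar.obj K)) (m : K ⟶ X) :
    ∃ v : K ⟶ R.iStar.obj (R.iShriek.obj X), v ≫ R.adj₂.counit.app X = m := by
  haveI := R.iStar_full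
  haveI := R.iStar_faithful
  obtain ⟨Z, ⟨e⟩⟩ := (R.essIm_iStar_eq_ker_jUStar K).2 ⟨hK.isoZero⟩
  refine ⟨e.inv ≫ R.iStar.map ((R.adj₂.homEquiv Z X) (e.hom ≫ m)), ?_⟩
  have h1 := (R.adj₂.homEquiv Z X).symm_apply_apply (e.hom ≫ m)
  rw [Adjunction.homEquiv_counit] at h1
  rw [Category.assoc, h1, e.inv_hom_id_assoc]

end

end AuxLemmas

/-- if `i^!` is exact, `0 → i_* i^! X → X → j_* j^* X → 0` is exact. -/
theorem counit_unit_shortExact_of_iShriek_exact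
    (R : Recollement A B C) (hiS : IsExactFunctor R.iShriek) (X : B) :
    ∃ w : R.adj₂.counit.app X ≫ R.adj₄.unit.app X = 0,
      (ShortComplex.mk (R.adj₂.counit.app X) (R.adj₄.unit.app X) w).ShortExact := by
  haveI := R.jUStar_exact.additive
  haveI := R.jStar_additive
  haveI := R.iStar_exact.additive
  haveI := hiS.additive
  haveI := R.jStar_full
  haveI := R.jStar_faithful
  haveI := R.iStar_full
  haveI := R.iStar_faithful
  have hz0 : IsZero (R.jUStar.obj (R.iStar.obj (R.iShriek.obj X))) :=
    aux_isZero_jUStar_iStar R _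
  -- the composition vanishes
  have w : R.adj₂.counit.app X ≫ R.adj₄.unit.app X = 0 := by
    have hnat : R.adj₂.counit.app X ≫ R.adj₄.unit.app X =
        R.adj₄.unit.app (R.iStar.obj (R.iShriek.obj X)) ≫
          (R.jUStar ⋙ R.jStar).map (R.adj₂.counit.app X) :=
      R.adj₄.unit.naturality (R.adj₂.counit.app X)
    have h0 : R.adj₄.unit.app (R.iStar.obj (R.iShriek.obj X)) = 0 :=
      (R.jStar.map_isZero hz0).eq_zero_of_tgt _
    rw [hnat, h0, zero_comp]
  -- `j^*` of the unit is an isomorphism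
  haveI hϑiso : IsIso (R.jUStar.map (R.adj₄.unit.app X)) := by
    have t := R.adj₄.left_triangle_components X
    haveI : IsIso (R.jUStar.map (R.adj₄.unit.app X) ≫
        R.adj₄.counit.app (R.jUStar.obj X)) := by
      rw [t]; exact ⟨𝟙 _, by simp, by simp⟩
    exact IsIso.of_isIso_comp_right _ (R.adj₄.counit.app (R.jUStar.obj X))
  -- the counit is a monomorphism
  haveI hmono : Mono (R.adj₂.counit.app X) := by
    haveI : Mono (R.jUStar.map (kernel.ι (R.adj₂.counit.app X))) :=
      R.jUStar_exact.mono_map _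
    have hι0 : R.jUStar.map (kernel.ι (R.adj₂.counit.app X)) = 0 :=
      hz0.eq_zero_of_tgt _
    have hKz : IsZero (R.jUStar.obj (kernel (R.adj₂.counit.app X))) :=
      IsZero.of_mono_eq_zero _ hι0
    obtain ⟨Z, ⟨e⟩⟩ := (R.essIm_iStar_eq_ker_jUStar _).2 ⟨hKz.isoZero⟩
    obtain ⟨g, hg⟩ := R.iStar.map_surjective (e.hom ≫ kernel.ι (R.adj₂.counit.app X))
    have hg0 : (R.adj₂.homEquiv _ X).symm g = 0 := by
      rw [Adjunction.homEquiv_counit, hg, Category.assoc, kernel.condition, comp_zero]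
    have hgz : g = 0 := by
      have h2 := ((R.adj₂.homEquiv _ X).apply_symm_apply g).symm
      rw [hg0, Adjunction.homEquiv_unit, Functor.map_zero, comp_zero] at h2
      exact h2
    have hιz : kernel.ι (R.adj₂.counit.app X) = 0 := by
      have h3 : e.hom ≫ kernel.ι (R.adj₂.counit.app X) = 0 := by
        rw [← hg, hgz, Functor.map_zero]
      calc kernel.ι (R.adj₂.counit.app X)
          = e.inv ≫ (e.hom ≫ kernel.ι (R.adj₂.counit.app X)) := by simp
        _ = 0 := by rw [h3, comp_zero]
    exact Abelian.mono_of_kernel_ι_eq_zero _ hιz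
  -- the unit is an epimorphism
  haveI hepi : Epi (R.adj₄.unit.app X) := by
    haveI : Epi (R.jUStar.map (cokernel.π (R.adj₄.unit.app X))) :=
      R.jUStar_exact.epi_map _
    have hπ0 : R.jUStar.map (cokernel.π (R.adj₄.unit.app X)) = 0 := by
      rw [← cancel_epi (R.jUStar.map (R.adj₄.unit.app X)), comp_zero,
        ← Functor.map_comp, cokernel.condition, Functor.map_zero]
    have hQz : IsZero (R.jUStar.obj (cokernel (R.adj₄.unit.app X))) :=
      IsZero.of_epi_eq_zero _ hπ0
    obtain ⟨W, ⟨e⟩⟩ := (R.essIm_iStar_eq_ker_jUStar _).2 ⟨hQz.isoZero⟩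
    haveI : Epi (R.iShriek.map (cokernel.π (R.adj₄.unit.app X))) := hiS.epi_map _
    have hπi0 : R.iShriek.map (cokernel.π (R.adj₄.unit.app X)) = 0 :=
      (aux_isZero_iShriek_jStar R _).eq_zero_of_src _
    have hQi : IsZero (R.iShriek.obj (cokernel (R.adj₄.unit.app X))) :=
      IsZero.of_epi_eq_zero _ hπi0
    have hW : IsZero W :=
      (hQi.of_iso (R.iShriek.mapIso e)).of_iso (asIso (R.adj₂.unit.app W))
    have hQ : IsZero (cokernel (R.adj₄.unit.app X)) :=
      (R.iStar.map_isZero hW).of_iso e.symm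
    exact Preadditive.epi_of_isZero_cokernel _ hQ
  -- exactness in the middle
  have hKz : IsZero (R.jUStar.obj (kernel (R.adj₄.unit.app X))) := by
    haveI : Mono (R.jUStar.map (kernel.ι (R.adj₄.unit.app X))) :=
      R.jUStar_exact.mono_map _
    have h0 : R.jUStar.map (kernel.ι (R.adj₄.unit.app X)) = 0 := by
      rw [← cancel_mono (R.jUStar.map (R.adj₄.unit.app X)), zero_comp,
        ← Functor.map_comp, kernel.condition, Functor.map_zero]
    exact IsZero.of_mono_eq_zero _ h0
  obtain ⟨v, hv⟩ := aux_factor_through_counit R (X := X) hKz (kernel.ι (R.adj₄.unit.app X))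
  refine ⟨w, { exact := ?_, mono_f := hmono, epi_g := hepi }⟩
  apply ShortComplex.exact_of_f_is_kernel
  exact KernelFork.IsLimit.ofι' _ w
    (fun {W'} k hk => ⟨kernel.lift _ k hk ≫ v, by
      rw [Category.assoc, hv, kernel.lift_ι]⟩)

end PaperRecollement
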